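/- arXiv:2509.12705 — 2 statements merged into one kernel-verified Lean document; each statement's English description precedes it below -/
import Mathlib

section
/- Let p be a prime and let f, g ∈ ℤ[x] be nonzero polynomials such that f is monic and the reduction ḡ ∈ 𝔽_p[x] of g modulo p is nonzero. Then res_x(f̄, ḡ) = 0 in 𝔽_p if and only if p divides res_x(f, g) in ℤ. Here the resultant res_x(f̄, ḡ) is taken at the actual degrees of f̄ and ḡ (the degree of ḡ may be smaller than that of g). -/
open Polynomial

/-- The Sylvester matrix of two polynomials `f`, `g` (of degrees `n := f.natDegree` and
`m := g.natDegree`): an `(m + n) × (m + n)` matrix whose first `m` columns are the shifted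
coefficient vectors of `f` and whose last `n` columns are the shifted coefficient vectors
of `g`. -/
noncomputable def sylvesterMatrix {R : Type*} [CommRing R] (f g : R[X]) :
    Matrix (Fin (g.natDegree + f.natDegree)) (Fin (g.natDegree + f.natDegree)) R :=
  fun i j =>
    if (j : ℕ) < g.natDegree then
      (if (j : ℕ) ≤ (i : ℕ) then f.coeff ((i : ℕ) - (j : ℕ)) else 0)
    else
      (if (j : ℕ) - g.natDegree ≤ (i : ℕ) then g.coeff ((i : ℕ) - ((j : ℕ) - g.natDegree))
       else 0)

/-- The resultant of two polynomials: the determinant of their Sylvester matrix,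
taken at their actual degrees. -/
noncomputable def resultant {R : Type*} [CommRing R] (f g : R[X]) : R :=
  (sylvesterMatrix f g).det

/-- Let `p` be a prime and `f, g ∈ ℤ[x]` nonzero with `f` monic and `ḡ ≠ 0` in `𝔽_p[x]`.
Then `res(f̄, ḡ) = 0` in `𝔽_p` if and only if `p ∣ res(f, g)` in `ℤ`. -/
noncomputable def sylAux {R : Type*} [CommRing R] (f g : R[X]) (k : ℕ) :
    Matrix (Fin (k + f.natDegree)) (Fin (k + f.natDegree)) R :=
  fun i j =>
    if (j : ℕ) < k then
      (if (j : ℕ) ≤ (i : ℕ) then f.coeff ((i : ℕ) - (j : ℕ)) else 0)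
    else
      (if (j : ℕ) - k ≤ (i : ℕ) then g.coeff ((i : ℕ) - ((j : ℕ) - k)) else 0)

lemma det_eq_single_last {R : Type*} [CommRing R] {N : ℕ}
    (M : Matrix (Fin (N+1)) (Fin (N+1)) R) (j0 : Fin (N+1))
    (h : ∀ j, j ≠ j0 → M (Fin.last N) j = 0) :
    M.det = (-1)^(N + (j0:ℕ)) * M (Fin.last N) j0 *
      (M.submatrix Fin.castSucc j0.succAbove).det := by
  rw [Matrix.det_succ_row M (Fin.last N)]
  rw [Finset.sum_eq_single j0]
  · simp [Fin.succAbove_last]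
  · intro j _ hj
    simp [h j hj]
  · simp

lemma sylAux_det_succ {R : Type*} [CommRing R] (f g : R[X]) (k : ℕ)
    (hf : f.Monic) (hk : g.natDegree ≤ k) :
    (sylAux f g (k+1)).det = (-1)^(f.natDegree) * (sylAux f g k).det := by
  set n := f.natDegree with hn
  have e : k + 1 + n = (k + n) + 1 := by omega
  set M : Matrix (Fin (k+n+1)) (Fin (k+n+1)) R :=
    (sylAux f g (k+1)).submatrix (Fin.cast e.symm) (Fin.cast e.symm) with hM
  have hdet : (sylAux f g (k+1)).det = M.det := by
    rw [hM, show ((Fin.cast e.symm : Fin (k+n+1) → Fin (k+1+n))) = (finCongr e.symm : _ ≃ _) from rfl,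
      Matrix.det_submatrix_equiv_self]
  set j0 : Fin (k+n+1) := ⟨k, by omega⟩ with hj0
  have hrow : ∀ j, j ≠ j0 → M (Fin.last (k+n)) j = 0 := by
    intro j hj
    have hjne : (j : ℕ) ≠ k := fun h => hj (Fin.ext h)
    simp only [hM, Matrix.submatrix_apply, sylAux, Fin.coe_cast, Fin.val_last]
    rcases lt_or_ge (j : ℕ) (k+1) with hlt | hge
    · have hjk : (j : ℕ) < k := by omega
      rw [if_pos (by omega), if_pos (by omega)]
      exact Polynomial.coeff_eq_zero_of_natDegree_lt (by omega)
    · rw [if_neg (by omega)]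
      have hj2 : (j : ℕ) ≤ k + n := by omega
      rw [if_pos (by omega)]
      exact Polynomial.coeff_eq_zero_of_natDegree_lt (by omega)
  have hval : M (Fin.last (k+n)) j0 = 1 := by
    simp only [hM, Matrix.submatrix_apply, sylAux, Fin.coe_cast, Fin.val_last, hj0]
    rw [if_pos (by omega), if_pos (by omega)]
    rw [show k + n - k = n by omega]
    exact hf.coeff_natDegree
  have hsub : M.submatrix Fin.castSucc j0.succAbove = sylAux f g k := by
    ext i j
    have hsa : ((j0.succAbove j : Fin (k+n+1)) : ℕ) =
        if (j : ℕ) < k then (j : ℕ) else (j : ℕ) + 1 := by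
      rcases lt_or_ge (j : ℕ) k with h | h
      · rw [Fin.succAbove_of_castSucc_lt, if_pos h]
        · rfl
        · simpa [Fin.lt_def] using h
      · rw [Fin.succAbove_of_le_castSucc, if_neg (by omega)]
        · rfl
        · simpa [Fin.le_def] using h
    rcases lt_or_ge (j : ℕ) k with h | h
    · rw [if_pos h] at hsa
      simp only [hM, Matrix.submatrix_apply, sylAux, Fin.coe_cast, Fin.coe_castSucc, hsa]
      rw [if_pos (show (j:ℕ) < k + 1 by omega), if_pos h]
    · rw [if_neg (by omega)] at hsa
      simp only [hM, Matrix.submatrix_apply, sylAux, Fin.coe_cast, Fin.coe_castSucc, hsa]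
      rw [if_neg (show ¬ (j:ℕ) + 1 < k + 1 by omega), if_neg (show ¬ (j:ℕ) < k by omega),
        show (j:ℕ) + 1 - (k+1) = (j:ℕ) - k from by omega]
  rw [hdet, det_eq_single_last M j0 hrow, hval, hsub, hj0]

  have hs : (-1 : R)^(k+n+((⟨k, by omega⟩ : Fin (k+n+1)) : ℕ)) = (-1)^n := by
    show (-1 : R)^(k+n+k) = (-1)^n
    rw [show k+n+k = 2*k+n by ring, pow_add, pow_mul, neg_one_sq, one_pow, one_mul]
  rw [hs]; ring

lemma sylvesterMatrix_eq_sylAux {R : Type*} [CommRing R] (f g : R[X]) :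
    sylvesterMatrix f g = sylAux f g g.natDegree := rfl

lemma sylAux_det_of_le {R : Type*} [CommRing R] (f g : R[X]) (hf : f.Monic)
    {k : ℕ} (hk : g.natDegree ≤ k) :
    (sylAux f g k).det = (-1)^(f.natDegree * (k - g.natDegree)) * _root_.resultant f g := by
  obtain ⟨t, rfl⟩ := Nat.exists_eq_add_of_le hk
  induction t with
  | zero => simp [_root_.resultant, sylvesterMatrix_eq_sylAux]
  | succ t ih =>
      rw [show g.natDegree + (t+1) = (g.natDegree + t) + 1 from rfl,
        sylAux_det_succ f g _ hf (by omega), ih (by omega)]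
      rw [show g.natDegree + t - g.natDegree = t by omega,
        show g.natDegree + t + 1 - g.natDegree = t + 1 by omega,
        ← mul_assoc, ← pow_add, Nat.mul_succ]
      ring_nf

lemma sylAux_map {R S : Type*} [CommRing R] [CommRing S] [Nontrivial S]
    (φ : R →+* S) (f g : R[X]) (hf : f.Monic) (k : ℕ) :
    (sylAux (f.map φ) (g.map φ) k).det = φ ((sylAux f g k).det) := by
  have hd : (f.map φ).natDegree = f.natDegree := hf.natDegree_map φ
  have e : k + (f.map φ).natDegree = k + f.natDegree := by rw [hd]
  rw [RingHom.map_det, RingHom.mapMatrix_apply]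
  rw [show ((sylAux f g k).map φ) =
    ((sylAux (f.map φ) (g.map φ) k).submatrix (Fin.cast e.symm) (Fin.cast e.symm)) from ?_]
  · rw [show ((Fin.cast e.symm : Fin (k + f.natDegree) → Fin (k + (f.map φ).natDegree)))
      = (finCongr e.symm : _ ≃ _) from rfl, Matrix.det_submatrix_equiv_self]
  · ext i j
    simp only [Matrix.map_apply, Matrix.submatrix_apply, sylAux, Fin.coe_cast,
      Polynomial.coeff_map]
    split_ifs <;> simp

/-- main -/
theorem resultant_map_eq_zero_iff (p : ℕ) (hp : p.Prime) (f g : Polynomial ℤ)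
    (hf0 : f ≠ 0) (hg0 : g ≠ 0) (hf : f.Monic)
    (hgbar : g.map (Int.castRingHom (ZMod p)) ≠ 0) :
    _root_.resultant (f.map (Int.castRingHom (ZMod p))) (g.map (Int.castRingHom (ZMod p))) = 0 ↔
      (p : ℤ) ∣ _root_.resultant f g := by
  haveI : Fact p.Prime := ⟨hp⟩
  set φ := Int.castRingHom (ZMod p) with hφ
  set F := f.map φ with hF
  set G := g.map φ with hG
  have hFmonic : F.Monic := hf.map φ
  have hm' : G.natDegree ≤ g.natDegree := Polynomial.natDegree_map_le
  have h1 : (sylAux F G g.natDegree).det = φ (_root_.resultant f g) := by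
    rw [sylAux_map φ f g hf g.natDegree]
    rfl
  have h2 : (sylAux F G g.natDegree).det =
      (-1)^(F.natDegree * (g.natDegree - G.natDegree)) * _root_.resultant F G :=
    sylAux_det_of_le F G hFmonic hm'
  set e := F.natDegree * (g.natDegree - G.natDegree) with he
  have key : φ (_root_.resultant f g) = (-1)^e * _root_.resultant F G := by rw [← h1, h2]
  have hunit : ∀ r : ZMod p, (-1 : ZMod p)^e * r = 0 ↔ r = 0 := by
    intro r
    rcases Nat.even_or_odd e with hev | hod
    · rw [hev.neg_one_pow, one_mul]
    · rw [hod.neg_one_pow, neg_one_mul, neg_eq_zero]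
  rw [← hunit (_root_.resultant F G), ← key]
  show (((_root_.resultant f g : ℤ) : ZMod p) = 0) ↔ _
  exact ZMod.intCast_zmod_eq_zero_iff_dvd _ p
end

section
/- Let f ∈ ℤ[x] be monic and irreducible of degree d ≥ 2 such that f splits into linear factors over K := ℚ[x]/⟨f⟩ (i.e., f is Galois), and let p be a prime not dividing the discriminant δ_f of f. Then the reduction f̄ ∈ 𝔽_p[x] is squarefree, and all monic irreducible factors of f̄ in 𝔽_p[x] have the same degree. -/
open Polynomial NumberField

/-- The discriminant `δ_f := (−1)^{d(d−1)/2} · res_x(f, f′)` of a polynomial `f ∈ ℤ[x]`. -/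
noncomputable def polyDisc (f : Polynomial ℤ) : ℤ :=
  (-1) ^ (f.natDegree * (f.natDegree - 1) / 2) * _root_.resultant f (derivative f)

/-- The resultant of `f` and `g` is a polynomial combination of `f` and `g`. -/
theorem resultant_isCombination {R : Type*} [CommRing R] (f g : R[X])
    (h : 0 < g.natDegree + f.natDegree) :
    ∃ a b : R[X], a * f + b * g = C (_root_.resultant f g) := by
  classical
  set n := f.natDegree with hn
  set m := g.natDegree with hm
  set N := m + n with hN
  set M : Matrix (Fin N) (Fin N) R := sylvesterMatrix f g with hM
  set A : Matrix (Fin N) (Fin N) R[X] := (M.map C).transpose with hA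
  set v : Fin N → R[X] := fun i => X ^ (i : ℕ) with hv
  have key : ∀ (q : R[X]) (e c : ℕ), c + e < N → q.natDegree ≤ e →
      (∑ i : Fin N, C (if c ≤ (i : ℕ) then q.coeff ((i : ℕ) - c) else 0) * X ^ (i : ℕ))
        = q * X ^ c := by
    intro q e c hce hq
    ext k
    rw [finset_sum_coeff, coeff_mul_X_pow']
    simp only [coeff_C_mul, coeff_X_pow, mul_ite, mul_one, mul_zero]
    by_cases hk : k < N
    · rw [Finset.sum_eq_single (⟨k, hk⟩ : Fin N)]
      · simp
      · intro i _ hi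
        rw [if_neg]
        intro e'
        exact hi (Fin.ext e'.symm)
      · simp
    · rw [Finset.sum_eq_zero]
      · by_cases hck : c ≤ k
        · rw [if_pos hck, coeff_eq_zero_of_natDegree_lt]
          omega
        · rw [if_neg hck]
      · intro i _
        rw [if_neg]
        omega
  have hw : A.mulVec v = fun j : Fin N =>
      if (j : ℕ) < m then f * X ^ (j : ℕ) else g * X ^ ((j : ℕ) - m) := by
    funext j
    rw [Matrix.mulVec]
    show (∑ i : Fin N, A j i * v i) = _
    have he : ∀ i : Fin N, A j i * v i = C (M i j) * X ^ (i : ℕ) := fun i => rfl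
    simp only [he]
    by_cases hj : (j : ℕ) < m
    · simp only [if_pos hj, hM, sylvesterMatrix, if_pos (show (j : ℕ) < g.natDegree from hj)]
      exact key f n (j : ℕ) (by omega) le_rfl
    · simp only [if_neg hj, hM, sylvesterMatrix, if_neg (show ¬ (j : ℕ) < g.natDegree from hj)]
      exact key g m ((j : ℕ) - m) (by omega) le_rfl
  have hdet : (A.adjugate).mulVec (A.mulVec v) = A.det • v := by
    rw [Matrix.mulVec_mulVec, Matrix.adjugate_mul, Matrix.smul_mulVec,
      Matrix.one_mulVec]
  have hdetA : A.det = C (_root_.resultant f g) := by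
    rw [hA, Matrix.det_transpose, ← RingHom.mapMatrix_apply, ← RingHom.map_det]
    rfl
  set i0 : Fin N := ⟨0, h⟩ with hi0
  have h0 : (A.adjugate).mulVec (A.mulVec v) i0 = C (_root_.resultant f g) := by
    rw [hdet, Pi.smul_apply, hdetA, hv, smul_eq_mul]
    simp [hi0]
  rw [Matrix.mulVec, hw] at h0
  refine ⟨∑ j : Fin N, if (j : ℕ) < m then A.adjugate i0 j * X ^ (j : ℕ) else 0,
      ∑ j : Fin N, if (j : ℕ) < m then 0 else A.adjugate i0 j * X ^ ((j : ℕ) - m), ?_⟩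
  rw [← h0]
  show _ = ∑ j : Fin N, A.adjugate i0 j *
      (if (j : ℕ) < m then f * X ^ (j : ℕ) else g * X ^ ((j : ℕ) - m))
  rw [Finset.sum_mul, Finset.sum_mul, ← Finset.sum_add_distrib]
  refine Finset.sum_congr rfl fun j _ => ?_
  by_cases hj : (j : ℕ) < m <;> simp [hj] <;> ring

theorem splits_multiset_prod' {F : Type*} [Field F] (M : Multiset F[X])
    (h : ∀ q ∈ M, Splits q) : Splits M.prod := by
  induction M using Multiset.induction_on with
  | empty => simpa using Splits.one
  | cons a s ih =>
      rw [Multiset.prod_cons]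
      exact Splits.mul (h a (Multiset.mem_cons_self a s))
        (ih fun q hq => h q (Multiset.mem_cons_of_mem hq))

/-- If `f ∈ ℤ[x]` is monic and irreducible of degree `d ≥ 2`, splits into linear factors
over `K := ℚ(θ)` (i.e. `f` is Galois), and `p` is a prime not dividing `δ_f`, then the
reduction `f̄ ∈ 𝔽_p[x]` is squarefree and all its monic irreducible factors have the
same degree. -/
theorem reduction_squarefree_and_factors_same_degree {K : Type*} [Field K] [NumberField K]
    (f : Polynomial ℤ) (hmonic : f.Monic) (hirr : Irreducible f) (hdeg : 2 ≤ f.natDegree)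
    (θ : 𝓞 K) (hroot : Polynomial.aeval θ f = 0)
    (hgen : Algebra.adjoin ℚ {(θ : K)} = ⊤)
    (hsplit : Polynomial.Splits ((f.map (Int.castRingHom ℚ)).map (algebraMap ℚ K)))
    (p : ℕ) (hp : p.Prime) (hpd : ¬ ((p : ℤ) ∣ polyDisc f)) :
    Squarefree (f.map (Int.castRingHom (ZMod p))) ∧
      ∀ g₁ g₂ : Polynomial (ZMod p), g₁.Monic → g₂.Monic →
        Irreducible g₁ → Irreducible g₂ →
        g₁ ∣ f.map (Int.castRingHom (ZMod p)) → g₂ ∣ f.map (Int.castRingHom (ZMod p)) →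
        g₁.natDegree = g₂.natDegree := by
  classical
  haveI hpfact : Fact p.Prime := ⟨hp⟩
  set r : ℤ := _root_.resultant f (derivative f) with hr
  have hpr : ¬ ((p : ℤ) ∣ r) := fun hd => hpd (Dvd.dvd.mul_left hd _)
  obtain ⟨a, b, hab⟩ := resultant_isCombination f (derivative f) (by omega)
  set toP := Int.castRingHom (ZMod p) with htoP
  set fbar := f.map toP with hfbar
  have hrbar : ((r : ZMod p)) ≠ 0 := by
    rw [Ne, ZMod.intCast_zmod_eq_zero_iff_dvd]
    exact_mod_cast hpr
  -- squarefreeness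
  have hcomb : a.map toP * fbar + b.map toP * ((derivative f).map toP) = C ((r : ZMod p)) := by
    have h1 := congrArg (Polynomial.map toP) hab
    simpa [Polynomial.map_add, Polynomial.map_mul, Polynomial.map_C] using h1
  have hsep : fbar.Separable := by
    rw [separable_def]
    refine ⟨C ((r : ZMod p))⁻¹ * a.map toP, C ((r : ZMod p))⁻¹ * b.map toP, ?_⟩
    rw [hfbar, derivative_map, mul_assoc, mul_assoc, ← mul_add, ← hfbar, hcomb,
      ← C_mul, inv_mul_cancel₀ hrbar, C_1]
  have hsq : Squarefree fbar := hsep.squarefree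
  -- the number field side
  set θ' : K := (θ : K) with hθ'
  have hroot' : aeval θ' f = 0 := by
    have h1 := congrArg (algebraMap (𝓞 K) K) hroot
    rw [map_zero] at h1
    rw [← h1, hθ', aeval_algebraMap_apply]
  have hint : IsIntegral ℤ θ' := ⟨f, hmonic, by rwa [← aeval_def]⟩
  have hintQ : IsIntegral ℚ θ' :=
    ⟨f.map (Int.castRingHom ℚ), hmonic.map _, by
      rw [← aeval_def]
      have : (Int.castRingHom ℚ) = algebraMap ℤ ℚ := by ext; simp
      rw [this, aeval_map_algebraMap]
      exact hroot'⟩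
  have hfQ0 : aeval θ' (f.map (Int.castRingHom ℚ)) = 0 := by
    have : (Int.castRingHom ℚ) = algebraMap ℤ ℚ := by ext; simp
    rw [this, aeval_map_algebraMap]
    exact hroot'
  have hfQirr : Irreducible (f.map (Int.castRingHom ℚ)) := by
    have : (Int.castRingHom ℚ) = algebraMap ℤ ℚ := by ext; simp
    rw [this]
    exact (hmonic.isPrimitive.irreducible_iff_irreducible_map_fraction_map).mp hirr
  have hminQ : f.map (Int.castRingHom ℚ) = minpoly ℚ θ' :=
    minpoly.eq_of_irreducible_of_monic hfQirr hfQ0 (hmonic.map _)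
  have hminZ : f = minpoly ℤ θ' := by
    have hdvd := minpoly.isIntegrallyClosed_dvd hint hroot'
    have hmu : ¬ IsUnit (minpoly ℤ θ') :=
      not_isUnit_of_natDegree_pos _ (minpoly.natDegree_pos hint)
    obtain ⟨k, hk⟩ := hdvd
    rcases hirr.isUnit_or_isUnit hk with h1 | h2
    · exact absurd h1 hmu
    · exact (eq_of_monic_of_associated (minpoly.monic hint) hmonic
        ⟨h2.unit, by rw [IsUnit.unit_spec]; exact hk.symm⟩).symm
  -- power basis
  set e : (Algebra.adjoin ℚ ({θ'} : Set K)) ≃ₐ[ℚ] K :=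
    (Subalgebra.equivOfEq _ _ hgen).trans Subalgebra.topEquiv with he
  set pb : PowerBasis ℚ K := (Algebra.adjoin.powerBasis hintQ).map e with hpb
  have hpbgen : pb.gen = θ' := by
    rw [hpb, PowerBasis.map_gen, Algebra.adjoin.powerBasis_gen]
    rfl
  -- the discriminant as an integer
  have hdiscint : IsIntegral ℤ (Algebra.discr ℚ pb.basis) := by
    refine Algebra.discr_isIntegral ℚ fun i => ?_
    rw [pb.basis_eq_pow]
    exact (hpbgen ▸ hint).pow _
  obtain ⟨D, hD⟩ : ∃ D : ℤ, algebraMap ℤ ℚ D = Algebra.discr ℚ pb.basis :=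
    IsIntegrallyClosed.isIntegral_iff.mp hdiscint
  -- p does not divide D
  have habK : aeval θ' b * aeval θ' (derivative f) = algebraMap ℤ K r := by
    have h1 := congrArg (aeval θ') hab
    simpa [hroot', aeval_C, algebraMap_int_eq] using h1
  have hpD : ¬ ((p : ℤ) ∣ D) := by
    set d := Module.finrank ℚ K with hd
    have hbint : IsIntegral ℤ (aeval θ' b) :=
      IsIntegral.of_mem_of_fg _ hint.fg_adjoin_singleton _ (aeval_mem_adjoin_singleton _ _)
    have hfint : IsIntegral ℤ (aeval θ' (derivative f)) :=
      IsIntegral.of_mem_of_fg _ hint.fg_adjoin_singleton _ (aeval_mem_adjoin_singleton _ _)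
    obtain ⟨Nb, hNb⟩ := IsIntegrallyClosed.isIntegral_iff.mp (Algebra.isIntegral_norm ℚ hbint)
    obtain ⟨Nf, hNf⟩ := IsIntegrallyClosed.isIntegral_iff.mp (Algebra.isIntegral_norm ℚ hfint)
    have hnorm : Nb * Nf = r ^ d := by
      have h2 := congrArg (Algebra.norm ℚ) habK
      rw [map_mul, ← hNb, ← hNf] at h2
      have h3 : algebraMap ℤ K r = algebraMap ℚ K ((r : ℚ)) := by simp [algebraMap_int_eq]
      rw [h3, Algebra.norm_algebraMap, ← hd] at h2
      simp only [algebraMap_int_eq, eq_intCast] at h2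
      exact_mod_cast h2
    have hpNf : ¬ ((p : ℤ) ∣ Nf) := by
      intro hdvd
      have : (p : ℤ) ∣ r ^ d := hnorm ▸ Dvd.dvd.mul_left hdvd Nb
      exact hpr ((Nat.prime_iff_prime_int.mp hp).dvd_of_dvd_pow this)
    -- discr = ± Nf
    have hdisc : Algebra.discr ℚ pb.basis =
        (-1 : ℚ) ^ (d * (d - 1) / 2) * (Nf : ℚ) := by
      rw [hd, Algebra.discr_powerBasis_eq_norm, hpbgen, ← hminQ, derivative_map]
      have h4 : (Int.castRingHom ℚ) = algebraMap ℤ ℚ := by ext; simp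
      rw [h4, aeval_map_algebraMap, ← hNf, algebraMap_int_eq, eq_intCast]
    have hDQ : ((D : ℚ)) = (-1 : ℚ) ^ (d * (d - 1) / 2) * ((Nf : ℚ)) := by
      rw [← hdisc, ← hD, algebraMap_int_eq, eq_intCast]
    intro hdvd
    apply hpNf
    rcases neg_one_pow_eq_or ℚ (d * (d - 1) / 2) with hsgn | hsgn <;> rw [hsgn] at hDQ
    · have hDN : D = Nf := by
        have h6 : ((D : ℚ)) = ((Nf : ℚ)) := by rw [hDQ, one_mul]
        exact_mod_cast h6
      exact hDN ▸ hdvd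
    · have hDN : D = -Nf := by
        have : ((D : ℚ)) = ((-Nf : ℤ) : ℚ) := by rw [hDQ]; push_cast; ring
        exact_mod_cast this
      rw [hDN] at hdvd
      exact (dvd_neg.mp hdvd)
  -- the order ℤ[x]/(f)
  have hev : eval₂ (algebraMap ℤ K) θ' f = 0 := by rwa [← aeval_def]
  set B := AdjoinRoot f with hBdef
  set jB : B →+* K := AdjoinRoot.lift (algebraMap ℤ K) θ' hev with hjB
  have hjBinj : Function.Injective jB := by
    rw [injective_iff_map_eq_zero]
    intro z hz
    obtain ⟨q, rfl⟩ := AdjoinRoot.mk_surjective z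
    rw [hjB, AdjoinRoot.lift_mk] at hz
    have hq0 : aeval θ' q = 0 := by rwa [aeval_def]
    have hdq := minpoly.isIntegrallyClosed_dvd hint hq0
    rw [← hminZ] at hdq
    rwa [AdjoinRoot.mk_eq_zero]
  have hjD : jB (algebraMap ℤ B D) = algebraMap ℤ K D := by
    rw [← RingHom.comp_apply]
    exact RingHom.congr_fun (RingHom.ext_int _ _) D
  -- roots of f over K
  set fK := f.map (algebraMap ℤ K) with hfK
  have hfKmonic : fK.Monic := hmonic.map _
  have hmapcomp : fK = (f.map (Int.castRingHom ℚ)).map (algebraMap ℚ K) := by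
    rw [hfK, Polynomial.map_map]
    congr 1
    exact RingHom.ext_int _ _
  have hsplitsK : fK.Splits := by
    rw [hmapcomp]
    exact hsplit
  set M := fK.roots with hMdef
  have hfKprod : fK = (M.map fun α => X - C α).prod :=
    hsplitsK.eq_prod_roots_of_monic hfKmonic
  have hintRoots : ∀ α ∈ M, IsIntegral ℤ α := by
    intro α hα
    refine ⟨f, hmonic, ?_⟩
    have h10 := isRoot_of_mem_roots hα
    rwa [eval₂_eq_eval_map]
  have hDα : ∀ α ∈ M, ∃ bb : B, jB bb = algebraMap ℤ K D * α := by
    intro α hα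
    have h7 := Algebra.discr_mul_isIntegral_mem_adjoin ℚ (R := ℤ) (B := pb)
      (hpbgen ▸ hint) (hintRoots α hα)
    rw [hpbgen, ← hD, Algebra.adjoin_singleton_eq_range_aeval] at h7
    rw [AlgHom.mem_range] at h7
    obtain ⟨q, hq⟩ := h7
    refine ⟨AdjoinRoot.mk f q, ?_⟩
    rw [hjB, AdjoinRoot.lift_mk, ← aeval_def, hq, Algebra.smul_def,
      ← IsScalarTower.algebraMap_apply]
  set c : K → B := fun α =>
    if hx : ∃ bb : B, jB bb = algebraMap ℤ K D * α then hx.choose else 0 with hcdef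
  have hc : ∀ α ∈ M, jB (c α) = algebraMap ℤ K D * α := by
    intro α hα
    have hx := hDα α hα
    simp only [hcdef, dif_pos hx]
    exact hx.choose_spec
  -- the key identity over K
  have hKid : (M.map fun α => C (algebraMap ℤ K D) * X - C (algebraMap ℤ K D * α)).prod
      = C (algebraMap ℤ K D) ^ Multiset.card M * fK := by
    have h9 : (M.map fun α => C (algebraMap ℤ K D) * X - C (algebraMap ℤ K D * α))
        = M.map fun α => C (algebraMap ℤ K D) * (X - C α) := by
      apply Multiset.map_congr rfl
      intro α hα
      rw [mul_sub, ← C_mul]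
    rw [h9, Multiset.prod_map_mul, ← hfKprod, Multiset.map_const', Multiset.prod_replicate]
  -- the key identity over B
  have hBid : (M.map fun α => C (algebraMap ℤ B D) * X - C (c α)).prod
      = C (algebraMap ℤ B D) ^ (Multiset.card M) * f.map (algebraMap ℤ B) := by
    apply Polynomial.map_injective jB hjBinj
    rw [← coe_mapRingHom, map_multiset_prod, Multiset.map_map, map_mul, map_pow,
      coe_mapRingHom]
    have hL : Multiset.map ((Polynomial.map jB) ∘ fun α =>
        C (algebraMap ℤ B D) * X - C (c α)) M
        = M.map fun α => C (algebraMap ℤ K D) * X - C (algebraMap ℤ K D * α) := by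
      apply Multiset.map_congr rfl
      intro α hα
      simp only [Function.comp_apply, Polynomial.map_sub, Polynomial.map_mul,
        Polynomial.map_C, Polynomial.map_X]
      rw [hc α hα, hjD]
    rw [hL, hKid, Polynomial.map_C, hjD, Polynomial.map_map,
      show jB.comp (algebraMap ℤ B) = algebraMap ℤ K from RingHom.ext_int _ _, hfK]
  -- the key divisibility
  have key : ∀ g : Polynomial (ZMod p), Irreducible g → g ∣ fbar →
      ∀ h : Polynomial (ZMod p), h.Monic → Irreducible h → h ∣ fbar →
        h.natDegree ∣ g.natDegree := by
    intro g hgirr hgdvd h hhm hhirr hhdvd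
    haveI : Fact (Irreducible g) := ⟨hgirr⟩
    set F := AdjoinRoot g with hF
    set t : F := AdjoinRoot.root g with ht
    have hgF : eval₂ (algebraMap (ZMod p) F) t g = 0 := by
      rw [AdjoinRoot.algebraMap_eq]
      exact AdjoinRoot.eval₂_root g
    have hevF : eval₂ (Int.castRingHom F) t f = 0 := by
      rw [eval₂_eq_eval_map]
      have hmm2 : f.map (Int.castRingHom F) = fbar.map (algebraMap (ZMod p) F) := by
        rw [hfbar, Polynomial.map_map,
          show (algebraMap (ZMod p) F).comp toP = Int.castRingHom F from RingHom.ext_int _ _]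
      rw [hmm2]
      obtain ⟨q, hq⟩ := hgdvd
      rw [hq, Polynomial.map_mul, eval_mul, ← eval₂_eq_eval_map, hgF, zero_mul]
    set ψ : B →+* F := AdjoinRoot.lift (Int.castRingHom F) t hevF with hψ
    have hψD : ψ (algebraMap ℤ B D) = algebraMap (ZMod p) F ((D : ZMod p)) := by
      have h11 : ψ.comp (algebraMap ℤ B)
          = (algebraMap (ZMod p) F).comp (Int.castRingHom (ZMod p)) := RingHom.ext_int _ _
      have h12 := RingHom.congr_fun h11 D
      simpa using h12
    have hDzmod : ((D : ZMod p)) ≠ 0 := by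
      rw [Ne, ZMod.intCast_zmod_eq_zero_iff_dvd]
      exact hpD
    have hDF : algebraMap (ZMod p) F ((D : ZMod p)) ≠ 0 := by
      intro h13
      exact hDzmod ((algebraMap (ZMod p) F).injective (by rwa [map_zero]))
    -- the identity over F
    have hFid : (M.map fun α => C (algebraMap (ZMod p) F ((D : ZMod p))) * X - C (ψ (c α))).prod
        = C (algebraMap (ZMod p) F ((D : ZMod p))) ^ (Multiset.card M)
          * f.map (Int.castRingHom F) := by
      have h8 := congrArg (⇑(mapRingHom ψ)) hBid
      rw [map_multiset_prod, Multiset.map_map, map_mul, map_pow, coe_mapRingHom] at h8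
      have hL2 : Multiset.map ((Polynomial.map ψ) ∘ fun α =>
          C (algebraMap ℤ B D) * X - C (c α)) M
          = M.map fun α => C (algebraMap (ZMod p) F ((D : ZMod p))) * X - C (ψ (c α)) := by
        apply Multiset.map_congr rfl
        intro α hα
        simp only [Function.comp_apply, Polynomial.map_sub, Polynomial.map_mul,
          Polynomial.map_C, Polynomial.map_X]
        rw [hψD]
      rw [hL2, Polynomial.map_C, hψD, Polynomial.map_map,
        show ψ.comp (algebraMap ℤ B) = Int.castRingHom F from RingHom.ext_int _ _] at h8
      rw [h8]
    have hsplitsF : Splits (f.map (Int.castRingHom F)) := by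
      have hsplitprod : Splits
          ((M.map fun α => C (algebraMap (ZMod p) F ((D : ZMod p))) * X - C (ψ (c α))).prod) := by
        apply splits_multiset_prod'
        intro q hq
        obtain ⟨α, hα, rfl⟩ := Multiset.mem_map.mp hq
        apply Splits.of_degree_le_one
        rw [sub_eq_add_neg, ← C_neg]
        exact degree_linear_le
      rw [hFid] at hsplitprod
      have hne : (C (algebraMap (ZMod p) F ((D : ZMod p))) ^ (Multiset.card M) : F[X])
          * f.map (Int.castRingHom F) ≠ 0 :=
        mul_ne_zero (pow_ne_zero _ (fun h14 => hDF (by simpa using (C_eq_zero.mp h14))))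
          ((hmonic.map _).ne_zero)
      exact (splits_mul'.mp hsplitprod).2.resolve_right (left_ne_zero_of_mul hne)
    have hsplitsFbar : Splits (fbar.map (algebraMap (ZMod p) F)) := by
      have h15 : fbar.map (algebraMap (ZMod p) F) = f.map (Int.castRingHom F) := by
        rw [hfbar, Polynomial.map_map,
          show (algebraMap (ZMod p) F).comp toP = Int.castRingHom F from RingHom.ext_int _ _]
      rw [h15]
      exact hsplitsF
    have hfbar0 : fbar ≠ 0 := (hmonic.map toP).ne_zero
    have hsph : Splits (h.map (algebraMap (ZMod p) F)) :=
      hsplitsFbar.of_dvd (Polynomial.map_ne_zero hfbar0) (Polynomial.map_dvd _ hhdvd)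
    obtain ⟨y, hy⟩ := hsph.exists_eval_eq_zero
      (by rw [degree_map]; exact fun h16 => (Polynomial.degree_pos_of_irreducible hhirr).ne' h16)
    have hy' : aeval y h = 0 := by rwa [aeval_def, eval₂_eq_eval_map]
    have hminy : h = minpoly (ZMod p) y := minpoly.eq_of_irreducible_of_monic hhirr hy' hhm
    have hg0 : g ≠ 0 := hgirr.ne_zero
    haveI : Module.Finite (ZMod p) F := (AdjoinRoot.powerBasis hg0).finite
    have hyint : IsIntegral (ZMod p) y := IsIntegral.of_finite _ _
    have hfr : Module.finrank (ZMod p) F = g.natDegree := by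
      rw [(AdjoinRoot.powerBasis hg0).finrank, AdjoinRoot.powerBasis_dim]
    rw [← hfr, hminy]
    exact minpoly.degree_dvd hyint
  exact ⟨hsq, fun g₁ g₂ h1m h2m h1i h2i h1d h2d =>
    Nat.dvd_antisymm (key g₂ h2i h2d g₁ h1m h1i h1d) (key g₁ h1i h1d g₂ h2m h2i h2d)⟩
end
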